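/- Let a₁ be a bounded sesquilinear form on V × W satisfying the inf-sup condition with constant c > 0 and nondegenerate in the second component, and let d be a bounded sesquilinear form on H × W with ‖d‖_{S(H×W,𝕂)} ≤ M. Then there exists a unique bounded linear operator C̃ : H → V such that a₁(C̃x, w) = d(x,w) for all x ∈ H and w ∈ W. Moreover ‖C̃x‖_V ≤ (M/c)‖x‖_H for all x ∈ H, and if the embedding j : V → H is a compact operator, then the operators C := j∘C̃ : H → H and C^V := C̃∘j : V → V are compact. -/

import Mathlib

/-- Lemma 3.3 (abstract version): given a bounded sesquilinear form `a₁` on `V × W`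
satisfying the inf-sup condition and nondegenerate in the second component, and a
bounded sesquilinear form `d` on `H × W` with `‖d‖ ≤ M`, there is a unique bounded
linear operator `C̃ : H → V` with `a₁(C̃x, w) = d(x, w)`; it satisfies
`‖C̃x‖_V ≤ (M/c)‖x‖_H`, and if `j : V → H` is compact then `j∘C̃` and `C̃∘j`
are compact. -/
theorem exists_unique_solution_operator
    {𝕂 V W H : Type*} [RCLike 𝕂]
    [NormedAddCommGroup V] [NormedSpace 𝕂 V] [CompleteSpace V]
    [NormedAddCommGroup W] [NormedSpace 𝕂 W] [CompleteSpace W] [Nontrivial W]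
    [NormedAddCommGroup H] [NormedSpace 𝕂 H] [CompleteSpace H]
    (hrefl : Function.Surjective ⇑(NormedSpace.inclusionInDoubleDual 𝕂 W))
    (j : V →L[𝕂] H) (hj : Function.Injective ⇑j)
    (a₁ : V →L[𝕂] (W →SL[starRingEnd 𝕂] 𝕂))
    (c : ℝ) (hc : 0 < c)
    (hinfsup : ∀ v : V, c * ‖v‖ ≤ ‖a₁ v‖)
    (hnondeg : ∀ w : W, (∀ v : V, a₁ v w = 0) → w = 0)
    (d : H →L[𝕂] (W →SL[starRingEnd 𝕂] 𝕂)) (M : ℝ) (hd : ‖d‖ ≤ M) :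
    ∃ Ct : H →L[𝕂] V,
      (∀ (x : H) (w : W), a₁ (Ct x) w = d x w) ∧
      (∀ Ct' : H →L[𝕂] V, (∀ (x : H) (w : W), a₁ (Ct' x) w = d x w) → Ct' = Ct) ∧
      (∀ x : H, ‖Ct x‖ ≤ (M / c) * ‖x‖) ∧
      (IsCompactOperator ⇑j →
        IsCompactOperator ⇑(j.comp Ct) ∧ IsCompactOperator ⇑(Ct.comp j)) := by
  classical
  -- antilipschitz
  have hanti : AntilipschitzWith (c⁻¹).toNNReal ⇑a₁ := by
    refine ContinuousLinearMap.antilipschitz_of_bound a₁ ?_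
    intro v
    rw [Real.coe_toNNReal' , max_eq_left_of_lt (inv_pos.mpr hc),
      ← inv_mul_le_iff₀ (inv_pos.mpr hc)]
    simpa using hinfsup v
  have hinj : Function.Injective ⇑a₁ := hanti.injective
  -- closed range
  have hclosed : IsClosed (Set.range ⇑a₁) :=
    hanti.isClosed_range a₁.uniformContinuous
  -- conjugation maps
  let conj1 : (W →L[𝕂] 𝕂) → (W →SL[starRingEnd 𝕂] 𝕂) := fun ℓ =>
    ((starL 𝕂 : 𝕂 ≃L⋆[𝕂] 𝕂).toContinuousLinearMap).comp ℓ
  let conj2 : (W →SL[starRingEnd 𝕂] 𝕂) → (W →L[𝕂] 𝕂) := fun f =>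
    ((starL 𝕂 : 𝕂 ≃L⋆[𝕂] 𝕂).toContinuousLinearMap).comp f
  have conj1_apply : ∀ ℓ w, conj1 ℓ w = star (ℓ w) := fun ℓ w => rfl
  have conj2_apply : ∀ f w, conj2 f w = star (f w) := fun f w => rfl
  have conj12 : ∀ f, conj1 (conj2 f) = f := by
    intro f; ext w; simp [conj1_apply, conj2_apply]
  -- surjectivity
  have hsurj : Function.Surjective ⇑a₁ := by
    by_contra hns
    rw [Function.Surjective] at hns
    push_neg at hns
    obtain ⟨f, hf⟩ := hns
    set p : Submodule 𝕂 (W →SL[starRingEnd 𝕂] 𝕂) := a₁.range with hp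
    haveI hpc : IsClosed (p : Set (W →SL[starRingEnd 𝕂] 𝕂)) := by
      have : (p : Set (W →SL[starRingEnd 𝕂] 𝕂)) = Set.range ⇑a₁ := by
        ext g; simp [hp, LinearMap.mem_range, Set.mem_range]
      rw [this]; exact hclosed
    -- quotient map as a continuous linear map
    let mkQc : (W →SL[starRingEnd 𝕂] 𝕂) →L[𝕂] ((W →SL[starRingEnd 𝕂] 𝕂) ⧸ p) :=
      ⟨p.mkQ, continuous_quot_mk⟩
    have hfq : mkQc f ≠ 0 := by
      show (Submodule.Quotient.mk f : (W →SL[starRingEnd 𝕂] 𝕂) ⧸ p) ≠ 0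
      rw [Ne, Submodule.Quotient.mk_eq_zero]
      intro hmem
      obtain ⟨v, hv⟩ := (LinearMap.mem_range).mp hmem
      exact hf v hv
    obtain ⟨g, hg1, hg2⟩ := exists_dual_vector 𝕂 (mkQc f) (fun h0 => hfq ((@norm_eq_zero _ (Submodule.Quotient.normedAddCommGroup p (hS := hpc)).toNormedAddGroup _).mp h0))
    let Φ : (W →SL[starRingEnd 𝕂] 𝕂) →L[𝕂] 𝕂 := g.comp mkQc
    have hΦf : Φ f ≠ 0 := by
      have hn : ‖mkQc f‖ ≠ 0 := by
        intro h0
        exact hfq ((@norm_eq_zero _ (Submodule.Quotient.normedAddCommGroup p (hS := hpc)).toNormedAddGroup _).mp h0)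
      intro h0
      have h1 : g (mkQc f) = 0 := h0
      rw [hg2] at h1
      exact hn (by exact_mod_cast h1)
    have hΦp : ∀ v : V, Φ (a₁ v) = 0 := by
      intro v
      have : mkQc (a₁ v) = 0 := by
        show (Submodule.Quotient.mk (a₁ v) : (W →SL[starRingEnd 𝕂] 𝕂) ⧸ p) = 0
        rw [Submodule.Quotient.mk_eq_zero]
        exact LinearMap.mem_range_self _ v
      simp [Φ, this]
    -- build ψ in the double dual
    let ψ₀ : (W →L[𝕂] 𝕂) →ₗ[𝕂] 𝕂 :=
      { toFun := fun ℓ => star (Φ (conj1 ℓ))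
        map_add' := by
          intro ℓ₁ ℓ₂
          have : conj1 (ℓ₁ + ℓ₂) = conj1 ℓ₁ + conj1 ℓ₂ := by
            ext w; simp [conj1_apply, star_add]
          simp [this, star_add]
        map_smul' := by
          intro a ℓ
          have : conj1 (a • ℓ) = star a • conj1 ℓ := by
            ext w; simp [conj1_apply, star_mul', mul_comm]
          simp [this, star_mul', mul_comm] }
    have hψ₀bound : ∀ ℓ : W →L[𝕂] 𝕂, ‖ψ₀ ℓ‖ ≤ ‖Φ‖ * ‖ℓ‖ := by
      intro ℓ
      have h1 : ‖conj1 ℓ‖ ≤ ‖ℓ‖ := by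
        refine ContinuousLinearMap.opNorm_le_bound _ (norm_nonneg ℓ) fun w => ?_
        rw [conj1_apply, norm_star]
        exact ℓ.le_opNorm w
      calc ‖ψ₀ ℓ‖ = ‖Φ (conj1 ℓ)‖ := norm_star _
        _ ≤ ‖Φ‖ * ‖conj1 ℓ‖ := Φ.le_opNorm _
        _ ≤ ‖Φ‖ * ‖ℓ‖ := by
            exact mul_le_mul_of_nonneg_left h1 (norm_nonneg Φ)
    let ψ : StrongDual 𝕂 (StrongDual 𝕂 W) :=
      LinearMap.mkContinuous ψ₀ ‖Φ‖ hψ₀bound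
    obtain ⟨w₀, hw₀⟩ := hrefl ψ
    have hψ_apply : ∀ ℓ : W →L[𝕂] 𝕂, ψ ℓ = ℓ w₀ := by
      intro ℓ
      rw [← hw₀]; exact NormedSpace.dual_def 𝕂 W w₀ ℓ
    have hw₀0 : w₀ = 0 := by
      apply hnondeg
      intro v
      have h1 : ψ (conj2 (a₁ v)) = star (Φ (a₁ v)) := by
        simp only [ψ, LinearMap.mkContinuous_apply]
        show star (Φ (conj1 (conj2 (a₁ v)))) = star (Φ (a₁ v))
        rw [conj12]
      rw [hΦp v, star_zero] at h1
      have h2 := hψ_apply (conj2 (a₁ v))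
      rw [h1, conj2_apply] at h2
      exact star_eq_zero.mp h2.symm
    have : Φ f = 0 := by
      have h1 : ψ (conj2 f) = star (Φ f) := by
        simp only [ψ, LinearMap.mkContinuous_apply]
        show star (Φ (conj1 (conj2 f))) = star (Φ f)
        rw [conj12]
      have h2 := hψ_apply (conj2 f)
      rw [h1, hw₀0, map_zero] at h2
      exact star_eq_zero.mp h2
    exact hΦf this
  -- the equivalence
  have hker : a₁.ker = ⊥ := LinearMap.ker_eq_bot.mpr hinj
  have hrange : a₁.range = ⊤ := LinearMap.range_eq_top.mpr hsurj
  let e := ContinuousLinearEquiv.ofBijective a₁ hker hrange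
  let Ct : H →L[𝕂] V := (e.symm : (W →SL[starRingEnd 𝕂] 𝕂) →L[𝕂] V).comp d
  have hCt : ∀ x : H, a₁ (Ct x) = d x := by
    intro x
    show a₁ (e.symm (d x)) = d x
    have := e.apply_symm_apply (d x)
    rwa [ContinuousLinearEquiv.coeFn_ofBijective] at this
  refine ⟨Ct, ?_, ?_, ?_, ?_⟩
  · intro x w; rw [hCt x]
  · intro Ct' hCt'
    ext x
    apply hinj
    rw [hCt x]
    ext w
    exact hCt' x w
  · intro x
    have h1 := hinfsup (Ct x)
    rw [hCt x] at h1
    have h2 : ‖d x‖ ≤ M * ‖x‖ := by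
      calc ‖d x‖ ≤ ‖d‖ * ‖x‖ := d.le_opNorm x
        _ ≤ M * ‖x‖ := mul_le_mul_of_nonneg_right hd (norm_nonneg x)
    rw [div_mul_eq_mul_div, le_div_iff₀ hc, mul_comm]
    exact h1.trans (h2)
  · intro hjc
    constructor
    · have := hjc.comp_clm Ct
      rwa [← ContinuousLinearMap.coe_comp'] at this
    · have := hjc.clm_comp Ct
      rwa [← ContinuousLinearMap.coe_comp'] at this
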